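/- Conditional bias decomposition of the matching imputation (the U_{3N} step in the proof of Theorem 1): for every unit i, E[Ŷᵢ¹ − Ŷᵢ⁰ | 𝒢] = ( μ1(Xᵢ) − μ0(Xᵢ) ) + (2Aᵢ − 1)·(1/M)·Σ_{j ∈ 𝒥_M(i)} ( μ_{1−Aᵢ}(Xᵢ) − μ_{1−Aᵢ}(Xⱼ) ) almost surely. -/

import Mathlib

open MeasureTheory ProbabilityTheory

private lemma sum_coeff_aux {N : ℕ} (i : Fin N) (s : Finset (Fin N)) (a m : ℝ)
    (f : Fin N → ℝ) :
    ∑ j : Fin N, (2 * a - 1) *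
        ((if j = i then (1:ℝ) else 0) - m * (if j ∈ s then (1:ℝ) else 0)) * f j
      = (2 * a - 1) * (f i - m * ∑ j ∈ s, f j) := by
  have h : ∀ j : Fin N, (2 * a - 1) *
      ((if j = i then (1:ℝ) else 0) - m * (if j ∈ s then (1:ℝ) else 0)) * f j
      = (2 * a - 1) * (if j = i then f j else 0)
        - ((2 * a - 1) * m) * (if j ∈ s then f j else 0) := by
    intro j; split_ifs <;> ring
  simp only [h, Finset.sum_sub_distrib, ← Finset.mul_sum]
  rw [Finset.sum_ite_eq' Finset.univ i f, if_pos (Finset.mem_univ i),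
    Finset.sum_ite_mem, Finset.univ_inter]
  ring

/-- Conditional bias decomposition of the matching imputation: for every
unit `i`,
`E[Ŷᵢ¹ − Ŷᵢ⁰ | 𝒢] = (μ1(Xᵢ) − μ0(Xᵢ))
    + (2Aᵢ − 1)·(1/M)·∑_{j ∈ 𝒥_M(i)} (μ_{1−Aᵢ}(Xᵢ) − μ_{1−Aᵢ}(Xⱼ))` a.s. -/
theorem matching_conditional_bias_decomposition
    {Ω : Type*} [m0Ω : MeasurableSpace Ω] (μ : Measure Ω) [IsProbabilityMeasure μ]
    {S : Type*} [MeasurableSpace S]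
    (N M : ℕ) (hM : 1 ≤ M)
    (Y A : Fin N → Ω → ℝ) (X : Fin N → Ω → S)
    (hYm : ∀ j, Measurable (Y j)) (hYint : ∀ j, Integrable (Y j) μ)
    (hA01 : ∀ j ω, A j ω = 0 ∨ A j ω = 1)
    (G : MeasurableSpace Ω) (hG : G ≤ m0Ω)
    (hGA : ∀ j, Measurable[G] (A j)) (hGX : ∀ j, Measurable[G] (X j))
    (μ₀ μ₁ : S → ℝ) (hμ₀ : Measurable μ₀) (hμ₁ : Measurable μ₁)
    (hcond : ∀ j, μ[Y j | G]
      =ᵐ[μ] fun ω => A j ω * μ₁ (X j ω) + (1 - A j ω) * μ₀ (X j ω))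
    (J : Fin N → Ω → Finset (Fin N))
    (hJmeas : ∀ j (s : Finset (Fin N)), MeasurableSet[G] {ω | J j ω = s})
    (hJcard : ∀ j ω, (J j ω).card = M)
    (hJopp : ∀ i ω, ∀ j ∈ J i ω, A j ω = 1 - A i ω)
    (i : Fin N) :
    μ[fun ω =>
        (if A i ω = 1 then Y i ω else (M : ℝ)⁻¹ * ∑ j ∈ J i ω, Y j ω)
        - (if A i ω = 0 then Y i ω else (M : ℝ)⁻¹ * ∑ j ∈ J i ω, Y j ω) | G]
      =ᵐ[μ] fun ω =>
        (μ₁ (X i ω) - μ₀ (X i ω))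
        + (2 * A i ω - 1) * ((M : ℝ)⁻¹ *
            ∑ j ∈ J i ω,
              (if A i ω = 1 then μ₀ (X i ω) - μ₀ (X j ω)
               else μ₁ (X i ω) - μ₁ (X j ω))) := by
  classical
  have hMne : (M : ℝ) ≠ 0 := by positivity
  have hMinv : (M : ℝ)⁻¹ ≤ 1 := by
    rw [inv_le_one_iff₀]; right; exact_mod_cast hM
  -- coefficients
  set c : Fin N → Ω → ℝ := fun j ω =>
    (2 * A i ω - 1) *
      ((if j = i then (1:ℝ) else 0) - (M : ℝ)⁻¹ * (if j ∈ J i ω then (1:ℝ) else 0))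
    with hc
  have hmemJ : ∀ j : Fin N, MeasurableSet[G] {ω | j ∈ J i ω} := by
    intro j
    have hset : {ω | j ∈ J i ω} = ⋃ s ∈ {s : Finset (Fin N) | j ∈ s}, {ω | J i ω = s} := by
      ext ω
      simp only [Set.mem_setOf_eq, Set.mem_iUnion]
      constructor
      · intro h; exact ⟨J i ω, h, rfl⟩
      · rintro ⟨s, hs, rfl⟩; exact hs
    rw [hset]
    exact MeasurableSet.biUnion (Set.to_countable _) fun s _ => hJmeas i s
  have hcmeas : ∀ j, Measurable[G] (c j) := by
    intro j
    refine Measurable.mul ?_ (Measurable.sub measurable_const ?_)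
    · exact (measurable_const.mul (hGA i)).sub measurable_const
    · exact measurable_const.mul (Measurable.ite (hmemJ j) measurable_const measurable_const)
  have hcbd : ∀ j ω, ‖c j ω‖ ≤ 2 * 2 := by
    intro j ω
    have h1 : ‖2 * A i ω - 1‖ ≤ 2 := by
      rcases hA01 i ω with h | h <;> rw [h] <;> norm_num
    have h2 : ‖(if j = i then (1:ℝ) else 0) -
        (M : ℝ)⁻¹ * (if j ∈ J i ω then (1:ℝ) else 0)‖ ≤ 2 := by
      have hnn : (0:ℝ) ≤ (M:ℝ)⁻¹ := by positivity
      rw [Real.norm_eq_abs, abs_le]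
      constructor <;> split_ifs <;> nlinarith
    calc ‖c j ω‖ = ‖2 * A i ω - 1‖ * ‖_ - _‖ := norm_mul _ _
      _ ≤ 2 * 2 := mul_le_mul h1 h2 (norm_nonneg _) (by norm_num)
  have hcY_int : ∀ j, Integrable (c j * Y j) μ := fun j =>
    (hYint j).bdd_mul (((hcmeas j).mono hG le_rfl).aestronglyMeasurable) (c := 2 * 2) (Filter.Eventually.of_forall (hcbd j))
  -- pointwise rewriting of the integrand
  have hpt : (fun ω =>
        (if A i ω = 1 then Y i ω else (M : ℝ)⁻¹ * ∑ j ∈ J i ω, Y j ω)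
        - (if A i ω = 0 then Y i ω else (M : ℝ)⁻¹ * ∑ j ∈ J i ω, Y j ω))
      = ∑ j : Fin N, c j * Y j := by
    funext ω
    have := sum_coeff_aux i (J i ω) (A i ω) (M:ℝ)⁻¹ (fun j => Y j ω)
    simp only [Finset.sum_apply, Pi.mul_apply, hc]
    rw [this]
    rcases hA01 i ω with h | h <;> rw [h] <;> norm_num <;> ring
  rw [hpt]
  have h1 : μ[∑ j : Fin N, c j * Y j | G] =ᵐ[μ] ∑ j : Fin N, μ[c j * Y j | G] :=
    condExp_finsetSum (fun j _ => hcY_int j) G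
  have h2 : ∀ j : Fin N, μ[c j * Y j | G]
      =ᵐ[μ] fun ω => c j ω * (A j ω * μ₁ (X j ω) + (1 - A j ω) * μ₀ (X j ω)) := by
    intro j
    refine (condExp_mul_of_stronglyMeasurable_left ((hcmeas j).stronglyMeasurable)
      (hcY_int j) (hYint j)).trans ?_
    filter_upwards [hcond j] with ω hω
    simp only [Pi.mul_apply, hω]
  have hall : ∀ᵐ ω ∂μ, ∀ j : Fin N, (μ[c j * Y j | G]) ω
      = c j ω * (A j ω * μ₁ (X j ω) + (1 - A j ω) * μ₀ (X j ω)) :=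
    ae_all_iff.2 fun j => h2 j
  refine h1.trans ?_
  filter_upwards [hall] with ω hω
  simp only [Finset.sum_apply]
  rw [Finset.sum_congr rfl fun j _ => hω j]
  -- final algebra
  have hsum := sum_coeff_aux i (J i ω) (A i ω) (M:ℝ)⁻¹
    (fun j => A j ω * μ₁ (X j ω) + (1 - A j ω) * μ₀ (X j ω))
  simp only [hc]
  rw [hsum]
  rcases hA01 i ω with h | h
  · -- A i ω = 0 : matches have A j = 1
    have hmatch : ∀ j ∈ J i ω, A j ω * μ₁ (X j ω) + (1 - A j ω) * μ₀ (X j ω)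
        = μ₁ (X j ω) := by
      intro j hj
      have := hJopp i ω j hj
      rw [this, h]; ring
    rw [Finset.sum_congr rfl hmatch, h]
    norm_num
    rw [hJcard i ω]
    field_simp
    ring
  · -- A i ω = 1 : matches have A j = 0
    have hmatch : ∀ j ∈ J i ω, A j ω * μ₁ (X j ω) + (1 - A j ω) * μ₀ (X j ω)
        = μ₀ (X j ω) := by
      intro j hj
      have := hJopp i ω j hj
      rw [this, h]; ring
    rw [Finset.sum_congr rfl hmatch, h]
    norm_num
    rw [hJcard i ω]
    field_simp
    ring
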